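/- Let D be a finite multipartite digraph with at least two partite classes, containing no cyclic triangle, and with β(D) = 1. Then there is a partite class K which is a dominating set, a vertex k ∈ K, and a partite class L ≠ K, such that every vertex of D lying outside K ∪ L is an outneighbor of k. -/

import Mathlib

/-- `a` is a vertex of class `A` beating every vertex of class `B`. -/
def SBeats {V ι : Type} (arc : V → V → Prop) (part : V → ι) (A B : ι) : Prop :=
  A ≠ B ∧ ∃ a, part a = A ∧ ∀ b, part b = B → arc a b

/-- The cyclic pattern of three classes. -/
def triCls {ι : Type} (K A1 A2 : ι) : ℕ → ι :=
  fun n => if n % 3 = 0 then K else if n % 3 = 1 then A1 else A2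

open Classical in
/-- A descending chain built by choice. -/
noncomputable def chainSeq {V : Type} (arc : V → V → Prop) (P : ℕ → V → Prop)
    (step : ∀ n v, P n v → ∃ w, P (n+1) w ∧ arc w v) (v0 : V) : ℕ → V
  | 0 => v0
  | n+1 =>
      if h : P n (chainSeq arc P step v0 n) then
        (step n _ h).choose
      else v0

theorem chainSeq_mem {V : Type} (arc : V → V → Prop) (P : ℕ → V → Prop)
    (step : ∀ n v, P n v → ∃ w, P (n+1) w ∧ arc w v) (v0 : V) (h0 : P 0 v0) :
    ∀ n, P n (chainSeq arc P step v0 n) := by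
  intro n
  induction n with
  | zero => exact h0
  | succ n ih =>
      rw [chainSeq, dif_pos ih]
      exact (step n _ ih).choose_spec.1

theorem chainSeq_arc {V : Type} (arc : V → V → Prop) (P : ℕ → V → Prop)
    (step : ∀ n v, P n v → ∃ w, P (n+1) w ∧ arc w v) (v0 : V) (h0 : P 0 v0) :
    ∀ n, arc (chainSeq arc P step v0 (n+1)) (chainSeq arc P step v0 n) := by
  intro n
  have ih := chainSeq_mem arc P step v0 h0 n
  rw [chainSeq, dif_pos ih]
  exact (step n _ ih).choose_spec.2

theorem multipartite_beta_one_strong_domination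
    (V ι : Type) [Fintype V] [Fintype ι]
    (arc : V → V → Prop) (part : V → ι)
    (hsurj : Function.Surjective part)
    (htwo : ∃ i j : ι, i ≠ j)
    (hirr : ∀ v, ¬ arc v v)
    (hasym : ∀ u v, arc u v → ¬ arc v u)
    (hpart : ∀ u v, arc u v → part u ≠ part v)
    (htri : ¬ ∃ a b c, arc a b ∧ arc b c ∧ arc c a)
    (hβ1 : ∀ u v : V, part u ≠ part v → arc u v ∨ arc v u) :
    ∃ K : ι, (∀ v : V, part v ≠ K → ∃ w : V, part w = K ∧ arc w v) ∧
      ∃ k : V, part k = K ∧ ∃ L : ι, L ≠ K ∧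
        ∀ v : V, part v ≠ K → part v ≠ L → arc k v := by
  classical
  -- transitivity across classes
  have tr : ∀ a b c : V, arc a b → arc b c → part a ≠ part c → arc a c := by
    intro a b c hab hbc hac
    by_contra h
    rcases hβ1 a c hac with h' | h'
    · exact h h'
    · exact htri ⟨a, b, c, hab, hbc, h'⟩
  -- pick K maximizing the number of classes strongly beaten
  obtain ⟨K, -, hKmax⟩ := Finset.exists_max_image Finset.univ
    (fun A => (Finset.univ.filter fun B => SBeats arc part A B).card)
    ⟨htwo.choose, Finset.mem_univ _⟩
  -- K is maximal: nothing strongly beats K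
  have hKtop : ∀ A, ¬ SBeats arc part A K := by
    intro A hA
    have hAK : A ≠ K := hA.1
    have hsub : insert K (Finset.univ.filter fun B => SBeats arc part K B) ⊆
        Finset.univ.filter fun B => SBeats arc part A B := by
      intro B hB
      rcases Finset.mem_insert.1 hB with rfl | hB
      · exact Finset.mem_filter.2 ⟨Finset.mem_univ _, hA⟩
      · have hKB := (Finset.mem_filter.1 hB).2
        have hAB : A ≠ B := by
          rintro rfl
          obtain ⟨-, a, ha, hab⟩ := hA
          obtain ⟨-, k, hk, hkb⟩ := hKB
          exact hasym a k (hab k hk) (hkb a ha)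
        refine Finset.mem_filter.2 ⟨Finset.mem_univ _, hAB, ?_⟩
        obtain ⟨-, a, ha, hab⟩ := hA
        obtain ⟨-, k, hk, hkb⟩ := hKB
        exact ⟨a, ha, fun b hb => tr a k b (hab k hk) (hkb b hb)
          (by rw [ha, hb]; exact hAB)⟩
    have hKnot : K ∉ (Finset.univ.filter fun B => SBeats arc part K B) := by
      intro h
      exact ((Finset.mem_filter.1 h).2).1 rfl
    have h1 := Finset.card_le_card hsub
    rw [Finset.card_insert_of_notMem hKnot] at h1
    have h2 := hKmax A (Finset.mem_univ A)
    omega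
  -- K is dominating
  have hdom : ∀ v, part v ≠ K → ∃ w, part w = K ∧ arc w v := by
    intro v hv
    by_contra h
    push_neg at h
    exact hKtop (part v)
      ⟨hv, v, rfl, fun b hb => (hβ1 v b (by rw [hb]; exact hv)).resolve_right (h b hb)⟩
  -- at most one class outside K is not strongly beaten by K
  have huniq : ∀ A1 A2 : ι, A1 ≠ K → A2 ≠ K → ¬ SBeats arc part K A1 →
      ¬ SBeats arc part K A2 → A1 = A2 := by
    intro A1 A2 h1 h2 hs1 hs2
    by_contra h12
    -- every vertex of K has an in-neighbour in A1
    have d1 : ∀ v, part v = K → ∃ w, part w = A1 ∧ arc w v := by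
      intro v hv
      by_contra h
      push_neg at h
      exact hs1 ⟨Ne.symm h1, v, hv, fun b hb =>
        (hβ1 v b (by rw [hv, hb]; exact Ne.symm h1)).resolve_right (h b hb)⟩
    -- A1 does not strongly beat A2
    have hnS12 : ¬ SBeats arc part A1 A2 := by
      rintro ⟨-, a1, ha1, hbeats⟩
      obtain ⟨κ, hκ, hκa⟩ := hdom a1 (by rw [ha1]; exact h1)
      exact hs2 ⟨Ne.symm h2, κ, hκ, fun b hb => tr κ a1 b hκa (hbeats b hb)
        (by rw [hκ, hb]; exact Ne.symm h2)⟩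
    -- every vertex of A1 has an in-neighbour in A2
    have d2 : ∀ v, part v = A1 → ∃ w, part w = A2 ∧ arc w v := by
      intro v hv
      by_contra h
      push_neg at h
      exact hnS12 ⟨h12, v, hv, fun b hb =>
        (hβ1 v b (by rw [hv, hb]; exact h12)).resolve_right (h b hb)⟩
    -- every vertex of A2 has an in-neighbour in K
    have d0 : ∀ v, part v = A2 → ∃ w, part w = K ∧ arc w v := fun v hv =>
      hdom v (by rw [hv]; exact h2)
    -- class pattern
    set g : ℕ → ι := triCls K A1 A2 with hg
    have hg0 : ∀ n : ℕ, n % 3 = 0 → g n = K := by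
      intro n h; simp [hg, triCls, h]
    have hg1 : ∀ n : ℕ, n % 3 = 1 → g n = A1 := by
      intro n h; simp [hg, triCls, h]
    have hg2 : ∀ n : ℕ, n % 3 = 2 → g n = A2 := by
      intro n h; simp [hg, triCls, h]
    have hginj : ∀ m n : ℕ, m % 3 ≠ n % 3 → g m ≠ g n := by
      intro m n h
      have hm : m % 3 = 0 ∨ m % 3 = 1 ∨ m % 3 = 2 := by omega
      have hn : n % 3 = 0 ∨ n % 3 = 1 ∨ n % 3 = 2 := by omega
      rcases hm with hm | hm | hm <;> rcases hn with hn | hn | hn <;>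
        first
          | (exact absurd (hm.trans hn.symm) h)
          | (rw [hg0 _ hm, hg1 _ hn]; exact Ne.symm h1)
          | (rw [hg0 _ hm, hg2 _ hn]; exact Ne.symm h2)
          | (rw [hg1 _ hm, hg0 _ hn]; exact h1)
          | (rw [hg1 _ hm, hg2 _ hn]; exact h12)
          | (rw [hg2 _ hm, hg0 _ hn]; exact h2)
          | (rw [hg2 _ hm, hg1 _ hn]; exact Ne.symm h12)
    -- step of the chain
    have hstep : ∀ n (v : V), part v = g n → ∃ w, part w = g (n+1) ∧ arc w v := by
      intro n v hv
      have hm : n % 3 = 0 ∨ n % 3 = 1 ∨ n % 3 = 2 := by omega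
      rcases hm with hm | hm | hm
      · rw [hg1 (n+1) (by omega)]
        exact d1 v (by rw [hv, hg0 n hm])
      · rw [hg2 (n+1) (by omega)]
        exact d2 v (by rw [hv, hg1 n hm])
      · rw [hg0 (n+1) (by omega)]
        exact d0 v (by rw [hv, hg2 n hm])
    obtain ⟨k0, hk0⟩ := hsurj K
    have hk0' : part k0 = g 0 := by rw [hg0 0 rfl]; exact hk0
    set x : ℕ → V := chainSeq arc (fun n v => part v = g n) hstep k0 with hx
    have hmem : ∀ n, part (x n) = g n :=
      chainSeq_mem arc (fun n v => part v = g n) hstep k0 hk0'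
    have harc : ∀ n, arc (x (n+1)) (x n) :=
      chainSeq_arc arc (fun n v => part v = g n) hstep k0 hk0'
    have hpne : ∀ m n : ℕ, m % 3 ≠ n % 3 → part (x m) ≠ part (x n) := by
      intro m n h
      rw [hmem m, hmem n]
      exact hginj m n h
    have beats : ∀ m n : ℕ, n < m → m % 3 ≠ n % 3 → arc (x m) (x n) := by
      intro m
      induction m using Nat.strong_induction_on with
      | _ m IH =>
        intro n hnm hmod
        obtain ⟨m', rfl⟩ : ∃ m', m = m' + 1 := ⟨m - 1, by omega⟩
        rcases eq_or_lt_of_le (Nat.lt_succ_iff.mp hnm) with h | h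
        · rw [← h]
          exact harc n
        · by_cases hmn : m' % 3 = n % 3
          · obtain ⟨m'', rfl⟩ : ∃ m'', m' = m'' + 1 := ⟨m' - 1, by omega⟩
            have h2 : arc (x (m'' + 1 + 1)) (x m'') :=
              tr _ (x (m'' + 1)) _ (harc (m'' + 1)) (harc m'') (hpne _ _ (by omega))
            have h3 : arc (x m'') (x n) := IH m'' (by omega) n (by omega) (by omega)
            exact tr _ _ _ h2 h3 (hpne _ _ hmod)
          · exact tr _ _ _ (harc m') (IH m' (by omega) n h hmn) (hpne _ _ hmod)
    have key : ∀ a b : ℕ, a < b → x a ≠ x b := by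
      intro a b h heq
      by_cases hmod : b % 3 = a % 3
      · have hv1 : arc (x b) (x (a+1)) := beats b (a+1) (by omega) (by omega)
        have hv2 : arc (x (a+1)) (x a) := harc a
        rw [heq] at hv2
        exact hasym _ _ hv1 hv2
      · have := beats b a h hmod
        rw [← heq] at this
        exact hirr _ this
    obtain ⟨a, b, hab, heq⟩ := Finite.exists_ne_map_eq_of_infinite x
    rcases lt_or_gt_of_ne hab with h | h
    · exact key a b h heq
    · exact key b a h heq.symm
  -- choose L
  have hL : ∃ L : ι, L ≠ K ∧ ∀ A : ι, A ≠ K → A ≠ L → SBeats arc part K A := by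
    by_cases hC : ∃ A, A ≠ K ∧ ¬ SBeats arc part K A
    · obtain ⟨L, hLK, hLS⟩ := hC
      refine ⟨L, hLK, fun A hAK hAL => ?_⟩
      by_contra h
      exact hAL (huniq A L hAK hLK h hLS)
    · push_neg at hC
      obtain ⟨i, j, hij⟩ := htwo
      by_cases hiK : i = K
      · exact ⟨j, by rw [← hiK]; exact hij.symm, fun A hAK _ => hC A hAK⟩
      · exact ⟨i, hiK, fun A hAK _ => hC A hAK⟩
  obtain ⟨L, hLK, hLS⟩ := hL
  obtain ⟨k0, hk0⟩ := hsurj K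
  -- merge single witnesses over a finset of classes
  have main : ∀ s : Finset ι, (∀ A ∈ s, SBeats arc part K A) →
      ∃ k, part k = K ∧ ∀ v, part v ∈ s → arc k v := by
    intro s
    induction s using Finset.induction_on with
    | empty => exact fun _ => ⟨k0, hk0, by simp⟩
    | @insert A s hAs IH =>
      intro hstrong
      obtain ⟨k, hkK, hk⟩ := IH fun B hB => hstrong B (Finset.mem_insert_of_mem hB)
      by_cases hall : ∀ v, part v = A → arc k v
      · refine ⟨k, hkK, fun v hv => ?_⟩
        rcases Finset.mem_insert.1 hv with h | h
        · exact hall v h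
        · exact hk v h
      · push_neg at hall
        obtain ⟨a, ha, hna⟩ := hall
        have hKA : K ≠ A := (hstrong A (Finset.mem_insert_self A s)).1
        have hak : arc a k := (hβ1 a k (by rw [ha, hkK]; exact Ne.symm hKA)).resolve_right hna
        obtain ⟨-, kA, hkA, hkAb⟩ := hstrong A (Finset.mem_insert_self A s)
        refine ⟨kA, hkA, fun v hv => ?_⟩
        rcases Finset.mem_insert.1 hv with h | h
        · exact hkAb v h
        · have hvK : K ≠ part v := (hstrong _ (Finset.mem_insert_of_mem h)).1
          have hvA : part a ≠ part v := by
            rw [ha]; intro e; exact hAs (e ▸ h)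
          have h1 : arc a v := tr a k v hak (hk v h) hvA
          exact tr kA a v (hkAb a ha) h1 (by rw [hkA]; exact hvK)
  obtain ⟨k, hkK, hk⟩ := main
    (Finset.univ.filter fun A => A ≠ K ∧ A ≠ L)
    (fun A hA => hLS A (Finset.mem_filter.1 hA).2.1 (Finset.mem_filter.1 hA).2.2)
  exact ⟨K, hdom, k, hkK, L, hLK, fun v hv1 hv2 =>
    hk v (Finset.mem_filter.2 ⟨Finset.mem_univ _, hv1, hv2⟩)⟩
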